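/- Let C be a compact C¹ one-dimensional submanifold of ℝ^n. If a closed (n-1)-dimensional disc D̄(p,u,r) intersects C in infinitely many points, then there exists z ∈ D̄(p,u,r) ∩ C at which the tangent vector t(z) of C satisfies t(z)·u = 0. -/

import Mathlib

open MeasureTheory Topology Filter

theorem stmt7 (n : ℕ) (hn : 2 < n)
    (γ : ℝ → EuclideanSpace ℝ (Fin n))
    (hγ : ContDiff ℝ 1 γ)
    (hinj : Set.InjOn γ (Set.Icc 0 1))
    (hreg : ∀ s ∈ Set.Icc (0 : ℝ) 1, deriv γ s ≠ 0)
    (p u : EuclideanSpace ℝ (Fin n)) (hu : ‖u‖ = 1) (r : ℝ) (hr : 0 < r)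
    (hinf : ({x | (inner ℝ (x - p) u : ℝ) = 0 ∧ ‖x - p‖ ≤ r} ∩
      γ '' Set.Icc 0 1).Infinite) :
    ∃ s ∈ Set.Icc (0 : ℝ) 1,
      (inner ℝ (γ s - p) u : ℝ) = 0 ∧ ‖γ s - p‖ ≤ r ∧ (inner ℝ (deriv γ s) u : ℝ) = 0 := by
  set f : ℝ → ℝ := fun s => (inner ℝ (γ s - p) u : ℝ) with hfdef
  set S : Set ℝ := {s | s ∈ Set.Icc (0:ℝ) 1 ∧ f s = 0 ∧ ‖γ s - p‖ ≤ r} with hSdef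
  have hSsub : ({x | (inner ℝ (x - p) u : ℝ) = 0 ∧ ‖x - p‖ ≤ r} ∩
      γ '' Set.Icc 0 1) ⊆ γ '' S := by
    rintro x ⟨⟨h1, h2⟩, s, hs, rfl⟩
    exact ⟨s, ⟨hs, h1, h2⟩, rfl⟩
  have hSinf : S.Infinite := by
    intro hfin
    exact hinf ((hfin.image γ).subset hSsub)
  have hcont : Continuous γ := hγ.continuous
  have hSclosed : IsClosed S := by
    have h1 : IsClosed {s : ℝ | f s = 0} :=
      isClosed_eq ((hcont.sub continuous_const).inner continuous_const) continuous_const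
    have h2 : IsClosed {s : ℝ | ‖γ s - p‖ ≤ r} :=
      isClosed_le ((hcont.sub continuous_const).norm) continuous_const
    have : S = (Set.Icc (0:ℝ) 1 ∩ {s | f s = 0}) ∩ {s | ‖γ s - p‖ ≤ r} := by
      ext x; simp [hSdef, and_assoc]
    rw [this]
    exact (isClosed_Icc.inter h1).inter h2
  obtain ⟨s₀, hs₀K, hacc⟩ :=
    hSinf.exists_accPt_of_subset_isCompact isCompact_Icc (fun s hs => hs.1)
  have hs₀S : s₀ ∈ S := by
    have : s₀ ∈ closure S := mem_closure_iff_clusterPt.mpr (AccPt.clusterPt hacc)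
    rwa [hSclosed.closure_eq] at this
  -- derivative of f
  have hdγ : HasDerivAt γ (deriv γ s₀) s₀ :=
    ((hγ.differentiable one_ne_zero) s₀).hasDerivAt
  have hdf : HasDerivAt f (inner ℝ (deriv γ s₀) u : ℝ) s₀ := by
    have : HasDerivAt (fun s => γ s - p) (deriv γ s₀) s₀ := hdγ.sub_const p
    have h := this.inner (𝕜 := ℝ) (hasDerivAt_const s₀ u)
    simpa using h
  -- slope argument
  have hne : (𝓝[S \ {s₀}] s₀).NeBot := by
    rw [accPt_principal_iff_nhdsWithin] at hacc
    exact hacc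
  have ht1 : Filter.Tendsto (slope f s₀) (𝓝[S \ {s₀}] s₀) (𝓝 (inner ℝ (deriv γ s₀) u : ℝ)) := by
    apply (hasDerivAt_iff_tendsto_slope.1 hdf).mono_left
    apply nhdsWithin_mono
    intro x hx
    exact hx.2
  have ht2 : Filter.Tendsto (slope f s₀) (𝓝[S \ {s₀}] s₀) (𝓝 0) := by
    have heq : ∀ x ∈ S \ {s₀}, slope f s₀ x = 0 := by
      intro x hx
      simp [slope, hx.1.2.1, hs₀S.2.1]
    refine Filter.Tendsto.congr' ?_ tendsto_const_nhds
    filter_upwards [self_mem_nhdsWithin] with x hx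
    exact (heq x hx).symm
  have hzero : (inner ℝ (deriv γ s₀) u : ℝ) = 0 := (tendsto_nhds_unique ht1 ht2)
  exact ⟨s₀, hs₀S.1, hs₀S.2.1, hs₀S.2.2, hzero⟩
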